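/- The prop Fun whose morphisms n → m are functions Fin n → Fin m (with composition of functions and tensor given by disjoint union) is generated by the multiplication μ : 2 → 1 (the unique function Fin 2 → Fin 1) and the unit η : 0 → 1 (the unique function Fin 0 → Fin 1) together with symmetries: every function Fin n → Fin m can be written as a composite of tensor products of identities, symmetries, μ and η. Moreover μ and η satisfy the commutative monoid axioms: associativity μ ∘ (μ ⊗ id) = μ ∘ (id ⊗ μ), unit μ ∘ (η ⊗ id) = id, and commutativity μ ∘ σ = μ where σ is the swap on Fin 2. -/
import Mathlib

set_option maxRecDepth 4000


/-- Tensor (disjoint union) of functions between finite sets: `f` acts on the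
first block and `g` (shifted) on the second. -/
def tensorFun {n m k l : ℕ} (f : Fin n → Fin m) (g : Fin k → Fin l) :
    Fin (n + k) → Fin (m + l) :=
  Fin.addCases (fun i => (f i).castAdd l) (fun j => (g j).natAdd m)

/-- The multiplication `μ : 2 → 1`, the unique function `Fin 2 → Fin 1`. -/
def muFun : Fin 2 → Fin 1 := fun _ => 0

/-- The unit `η : 0 → 1`, the unique function `Fin 0 → Fin 1`. -/
def etaFun : Fin 0 → Fin 1 := Fin.elim0

/-- The class of morphisms of the prop `Fun` generated from identities,
symmetries, `μ` and `η` under composition and tensor product. -/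
inductive FunGen : ∀ {n m : ℕ}, (Fin n → Fin m) → Prop
  | id (n : ℕ) : FunGen (id : Fin n → Fin n)
  | symm {n : ℕ} (e : Equiv.Perm (Fin n)) : FunGen ⇑e
  | mu : FunGen muFun
  | eta : FunGen etaFun
  | comp {n m k : ℕ} {f : Fin n → Fin m} {g : Fin m → Fin k} :
      FunGen f → FunGen g → FunGen (g ∘ f)
  | tensor {n m k l : ℕ} {f : Fin n → Fin m} {g : Fin k → Fin l} :
      FunGen f → FunGen g → FunGen (tensorFun f g)

/-- Any function into `Fin 1` is generated. -/
lemma funGen_toOne : ∀ (n : ℕ) (f : Fin n → Fin 1), FunGen f := by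
  intro n
  induction n with
  | zero =>
    intro f
    have : f = etaFun := funext (fun i => i.elim0)
    rw [this]; exact FunGen.eta
  | succ n ih =>
    intro f
    have h : f = muFun ∘ tensorFun (fun _ => (0 : Fin 1)) (id : Fin 1 → Fin 1) := by
      funext i; exact Subsingleton.elim _ _
    rw [h]
    exact FunGen.comp (FunGen.tensor (ih _) (FunGen.id 1)) FunGen.mu

/-- Composing with a cast on the domain preserves generation. -/
lemma funGen_comp_cast {a b a' : ℕ} {f : Fin a → Fin b} (hf : FunGen f)
    (h : a' = a) : FunGen (f ∘ Fin.cast h) := by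
  subst h
  rw [Fin.cast_refl]
  simpa using hf

/-- Every monotone function is generated. -/
lemma funGen_monotone : ∀ (m n : ℕ) (f : Fin n → Fin m), Monotone f → FunGen f := by
  intro m
  induction m with
  | zero =>
    intro n f _
    cases n with
    | zero =>
      have : f = (id : Fin 0 → Fin 0) := funext (fun i => i.elim0)
      rw [this]; exact FunGen.id 0
    | succ n => exact (f 0).elim0
  | succ M ih =>
    intro n f hmono
    classical
    set S : Finset (Fin n) := Finset.univ.filter (fun i => f i = Fin.last M) with hS
    set k : ℕ := S.card with hk
    have hkn : k ≤ n := by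
      calc k ≤ Finset.univ.card := Finset.card_le_card (Finset.filter_subset _ _)
      _ = n := by simp
    have hup : ∀ i j : Fin n, i ≤ j → f i = Fin.last M → f j = Fin.last M := by
      intro i j hij hfi
      have := hmono hij
      rw [hfi] at this
      exact le_antisymm (Fin.le_last _) this
    have hmem : ∀ i : Fin n, f i = Fin.last M ↔ n - k ≤ i.val := by
      intro i
      constructor
      · intro hfi
        by_contra hlt
        push_neg at hlt
        have hsub : Finset.Ici i ⊆ S := by
          intro j hj
          simp only [Finset.mem_Ici] at hj
          simp only [hS, Finset.mem_filter, Finset.mem_univ, true_and]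
          exact hup i j hj hfi
        have hcard := Finset.card_le_card hsub
        rw [Fin.card_Ici] at hcard
        omega
      · intro hge
        by_contra hfi
        have hsub : S ⊆ Finset.Ioi i := by
          intro j hj
          simp only [hS, Finset.mem_filter, Finset.mem_univ, true_and] at hj
          simp only [Finset.mem_Ioi]
          by_contra hle
          push_neg at hle
          exact hfi (hup j i hle hj)
        have hcard := Finset.card_le_card hsub
        rw [Fin.card_Ioi] at hcard
        have := i.isLt
        omega
    have hj : n = (n - k) + k := by omega
    have hne : ∀ i : Fin (n - k),
        f (Fin.cast hj.symm (Fin.castAdd k i)) ≠ Fin.last M := by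
      intro i hcon
      rw [hmem] at hcon
      simp only [Fin.coe_cast, Fin.coe_castAdd] at hcon
      omega
    set g₁ : Fin (n - k) → Fin M :=
      fun i => (f (Fin.cast hj.symm (Fin.castAdd k i))).castPred (hne i) with hg₁
    have hg₁mono : Monotone g₁ := by
      intro a b hab
      have hle : (Fin.cast hj.symm (Fin.castAdd k a)) ≤
          (Fin.cast hj.symm (Fin.castAdd k b)) := by
        simp only [Fin.le_def, Fin.coe_cast, Fin.coe_castAdd]
        exact hab
      have := hmono hle
      rw [Fin.le_def] at this
      simp only [hg₁, Fin.le_def, Fin.coe_castPred]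
      exact this
    set g₂ : Fin k → Fin 1 := fun _ => 0 with hg₂
    have hfeq : f = tensorFun g₁ g₂ ∘ Fin.cast hj := by
      funext i
      by_cases hlt : i.val < n - k
      · have h1 : Fin.cast hj i = Fin.castAdd k ⟨i.val, hlt⟩ := by
          apply Fin.ext; simp
        simp only [Function.comp_apply, h1, tensorFun, Fin.addCases_left]
        have h2 : Fin.cast hj.symm (Fin.castAdd k (⟨i.val, hlt⟩ : Fin (n - k))) = i := by
          apply Fin.ext; simp
        rw [hg₁]
        simp only [h2]
        exact (Fin.castSucc_castPred _ _).symm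
      · push_neg at hlt
        have hik : i.val - (n - k) < k := by have := i.isLt; omega
        have h1 : Fin.cast hj i = Fin.natAdd (n - k) ⟨i.val - (n - k), hik⟩ := by
          apply Fin.ext; simp; omega
        simp only [Function.comp_apply, h1, tensorFun, Fin.addCases_right]
        have h2 : f i = Fin.last M := (hmem i).2 hlt
        rw [h2]
        apply Fin.ext
        simp [hg₂, Fin.last]
    rw [hfeq]
    exact funGen_comp_cast (FunGen.tensor (ih _ g₁ hg₁mono) (funGen_toOne _ g₂)) hj

/-- Every function between finite sets is generated. -/
lemma funGen_all (n m : ℕ) (f : Fin n → Fin m) : FunGen f := by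
  have h : f = (f ∘ ⇑(Tuple.sort f)) ∘ ⇑(Tuple.sort f)⁻¹ := by
    funext i; simp
  rw [h]
  exact FunGen.comp (FunGen.symm _)
    (funGen_monotone _ _ _ (Tuple.monotone_sort f))

/-- The prop `Fun` of functions between finite sets is generated by `μ`, `η`
and the symmetries: every function `Fin n → Fin m` is a composite of tensor
products of identities, symmetries, `μ` and `η`.  Moreover `μ` and `η` satisfy
the commutative monoid axioms: associativity, unit and commutativity. -/
theorem fun_prop_generated_by_commutative_monoid :
    (∀ (n m : ℕ) (f : Fin n → Fin m), FunGen f) ∧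
    (muFun ∘ tensorFun muFun (id : Fin 1 → Fin 1) =
      muFun ∘ tensorFun (id : Fin 1 → Fin 1) muFun) ∧
    (muFun ∘ tensorFun etaFun (id : Fin 1 → Fin 1) = id) ∧
    (muFun ∘ ⇑(Equiv.swap (0 : Fin 2) 1) = muFun) := by
  refine ⟨funGen_all, ?_, ?_, ?_⟩ <;>
    · funext i; exact Subsingleton.elim _ _
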